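/- Let F : [0,∞) → ℝ be C¹ with F(0) = F'(0) = 0, F convex, and suppose there exist constants c₀ > 0, C₀ and an exponent m ≥ 2 with F''(r) ≥ c₀ r^{m−2} and F'(r) ≤ C₀ r^{m−1} for all r in (0, Ū]. Then for 0 ≤ u < ū ≤ Ū the Bregman divergence d_F(u|ū) = ∫_u^{ū}(r−u)F''(r)dr satisfies d_F(u|ū) ≥ (3c₀/2^{m+1})·ū^{m−2}·(u − ū)². -/

import Mathlib

/-- If `F` is C¹ on `[0,Ū]` with `F(0) = F'(0) = 0`, convex, and satisfies the power-law
bounds `F''(r) ≥ c₀ r^{m−2}` and `F'(r) ≤ C₀ r^{m−1}` on `(0, Ū]` for some `m ≥ 2`, then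
for `0 ≤ u < ū ≤ Ū` the Bregman divergence satisfies
`d_F(u|ū) ≥ (3c₀/2^{m+1})·ū^{m−2}·(u − ū)²`. -/
theorem bregman_power_lower_bound
    (F F' F'' : ℝ → ℝ) (c₀ C₀ Ub m : ℝ)
    (hc₀ : 0 < c₀) (hUb : 0 < Ub) (hm : 2 ≤ m)
    (hF0 : F 0 = 0) (hF'0 : F' 0 = 0)
    (hF : ∀ r ∈ Set.Icc (0 : ℝ) Ub, HasDerivWithinAt F (F' r) (Set.Icc 0 Ub) r)
    (hF' : ∀ r ∈ Set.Ioc (0 : ℝ) Ub, HasDerivWithinAt F' (F'' r) (Set.Icc 0 Ub) r)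
    (hlow : ∀ r ∈ Set.Ioc (0 : ℝ) Ub, c₀ * r ^ (m - 2) ≤ F'' r)
    (hupp : ∀ r ∈ Set.Ioc (0 : ℝ) Ub, F' r ≤ C₀ * r ^ (m - 1)) :
    ∀ u ub : ℝ, 0 ≤ u → u < ub → ub ≤ Ub →
      3 * c₀ / 2 ^ (m + 1) * ub ^ (m - 2) * (u - ub) ^ 2 ≤
        F u - F ub - (u - ub) * F' ub := by
  intro u ub hu hlt hub
  have hm2 : (0:ℝ) ≤ m - 2 := by linarith
  have hub0 : 0 < ub := lt_of_le_of_lt hu hlt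
  set a := max u (ub/2) with ha
  have ha0 : 0 < a := lt_max_of_lt_right (by linarith)
  have hua : u ≤ a := le_max_left _ _
  have haub : a < ub := max_lt hlt (by linarith)
  have haUb : a ≤ Ub := le_of_lt (lt_of_lt_of_le haub hub)
  set c := c₀ * (ub/2) ^ (m-2) with hc
  have hcpos : 0 < c := mul_pos hc₀ (Real.rpow_pos_of_pos (by linarith) _)
  -- continuity
  have hFc : ContinuousOn F (Set.Icc 0 Ub) := fun r hr => (hF r hr).continuousWithinAt
  have hF'c : ContinuousOn F' (Set.Ioc 0 Ub) := fun r hr =>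
    ((hF' r hr).continuousWithinAt).mono Set.Ioc_subset_Icc_self
  -- MVT for F
  have keyF : ∀ x y : ℝ, 0 ≤ x → x < y → y ≤ Ub →
      ∃ ξ ∈ Set.Ioo x y, F y - F x = (y - x) * F' ξ := by
    intro x y hx hxy hy
    have hne : y - x ≠ 0 := ne_of_gt (by linarith)
    obtain ⟨ξ, hξ, hs⟩ := exists_hasDerivAt_eq_slope F F' hxy
      (hFc.mono (Set.Icc_subset_Icc hx hy))
      (fun r hr => (hF r ⟨le_of_lt (lt_of_le_of_lt hx hr.1),
        le_of_lt (lt_of_lt_of_le hr.2 hy)⟩).hasDerivAt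
        (Icc_mem_nhds (lt_of_le_of_lt hx hr.1) (lt_of_lt_of_le hr.2 hy)))
    refine ⟨ξ, hξ, ?_⟩
    rw [eq_div_iff hne] at hs
    linarith [hs]
  -- MVT for F'
  have keyF' : ∀ x y : ℝ, 0 < x → x < y → y ≤ Ub →
      ∃ θ ∈ Set.Ioo x y, F' y - F' x = (y - x) * F'' θ := by
    intro x y hx hxy hy
    have hne : y - x ≠ 0 := ne_of_gt (by linarith)
    obtain ⟨θ, hθ, hs⟩ := exists_hasDerivAt_eq_slope F' F'' hxy
      (hF'c.mono (fun r hr => ⟨lt_of_lt_of_le hx hr.1, le_trans hr.2 hy⟩))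
      (fun r hr => (hF' r ⟨lt_trans hx hr.1, le_of_lt (lt_of_lt_of_le hr.2 hy)⟩).hasDerivAt
        (Icc_mem_nhds (lt_trans hx hr.1) (lt_of_lt_of_le hr.2 hy)))
    refine ⟨θ, hθ, ?_⟩
    rw [eq_div_iff hne] at hs
    linarith [hs]
  -- F'' is nonneg on (0,Ub]
  have hF''nn : ∀ r ∈ Set.Ioc (0:ℝ) Ub, 0 ≤ F'' r := by
    intro r hr
    exact le_trans (mul_nonneg hc₀.le (Real.rpow_nonneg (le_of_lt hr.1) _)) (hlow r hr)
  -- F'' ≥ c on [ub/2, Ub]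
  have hF''c : ∀ r, ub/2 ≤ r → r ≤ Ub → c ≤ F'' r := by
    intro r h1 h2
    have hr0 : (0:ℝ) < r := lt_of_lt_of_le (by linarith) h1
    refine le_trans ?_ (hlow r ⟨hr0, h2⟩)
    exact mul_le_mul_of_nonneg_left (Real.rpow_le_rpow (by linarith) h1 hm2) hc₀.le
  have haub2 : ub/2 ≤ a := le_max_right _ _
  -- Step 1
  have step1 : 0 ≤ F u - F a - (u - a) * F' a := by
    rcases eq_or_lt_of_le hua with h | h
    · rw [← h]
      have : F u - F u - (u - u) * F' u = 0 := by ring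
      linarith
    · obtain ⟨ξ, hξ, hFa⟩ := keyF u a hu h haUb
      have hξ0 : 0 < ξ := lt_of_le_of_lt hu hξ.1
      obtain ⟨θ, hθ, hd⟩ := keyF' ξ a hξ0 hξ.2 haUb
      have hθnn : 0 ≤ F'' θ := hF''nn θ ⟨lt_trans hξ0 hθ.1, le_trans hθ.2.le haUb⟩
      have p1 : (0:ℝ) ≤ (a - u) * ((a - ξ) * F'' θ) :=
        mul_nonneg (by linarith) (mul_nonneg (by linarith [hξ.2]) hθnn)
      have e1 : F u - F a - (u - a) * F' a = (a - u) * ((a - ξ) * F'' θ) := by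
        linear_combination (-1 : ℝ) * hFa + (a - u) * hd
      rw [e1]; exact p1
  -- Step 3
  have step3 : c * (ub - a) ≤ F' ub - F' a := by
    obtain ⟨θ, hθ, hd⟩ := keyF' a ub ha0 haub hub
    have hθc : c ≤ F'' θ := hF''c θ (le_trans haub2 hθ.1.le) (le_trans hθ.2.le hub)
    have := mul_le_mul_of_nonneg_left hθc (show (0:ℝ) ≤ ub - a by linarith)
    linarith [hd, this]
  -- Step 2
  have step2 : c * (ub - a)^2 / 2 ≤ F a - F ub - (a - ub) * F' ub := by
    have keyG : ∃ η ∈ Set.Ioo a ub,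
        (F ub - c/2*ub^2) - (F a - c/2*a^2) = (ub - a) * (F' η - c * η) := by
      have hne : ub - a ≠ 0 := ne_of_gt (by linarith)
      obtain ⟨η, hη, hs⟩ := exists_hasDerivAt_eq_slope
          (fun r => F r - c/2*r^2) (fun r => F' r - c*r) haub
        (ContinuousOn.sub (hFc.mono (Set.Icc_subset_Icc ha0.le hub))
          (continuous_const.mul (continuous_pow 2)).continuousOn)
        (by
          intro r hr
          have h1 : (0:ℝ) < r := lt_trans ha0 hr.1
          have h2 : r < Ub := lt_of_lt_of_le hr.2 hub
          have hq : HasDerivAt (fun r : ℝ => c/2*r^2) (c*r) r := by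
            have := (hasDerivAt_pow 2 r).const_mul (c/2)
            exact this.congr_deriv (by rw [show (2:ℕ) - 1 = 1 from rfl]; push_cast; ring)
          exact ((hF r ⟨h1.le, h2.le⟩).hasDerivAt (Icc_mem_nhds h1 h2)).sub hq)
      refine ⟨η, hη, ?_⟩
      rw [eq_div_iff hne] at hs
      linarith [hs]
    obtain ⟨η, hη, hGeq⟩ := keyG
    obtain ⟨θ, hθ, hd⟩ := keyF' η ub (lt_trans ha0 hη.1) hη.2 hub
    have hθc : c ≤ F'' θ := hF''c θ (le_trans haub2 (le_trans hη.1.le hθ.1.le))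
      (le_trans hθ.2.le hub)
    have hmono : F' η - c * η ≤ F' ub - c * ub := by
      have := mul_le_mul_of_nonneg_left hθc (show (0:ℝ) ≤ ub - η by linarith [hη.2])
      linarith [hd, this]
    have key : (ub - a) * (F' η - c * η) ≤ (ub - a) * (F' ub - c * ub) :=
      mul_le_mul_of_nonneg_left hmono (by linarith)
    nlinarith [hGeq, key]
  -- combine
  have h3 : c * (ub - a) * (a - u) ≤ (a - u) * (F' ub - F' a) := by
    have hau : 0 ≤ a - u := by linarith
    nlinarith [step3]
  have hcomb : c * ((ub - a)^2/2 + (a - u)*(ub - a)) ≤ F u - F ub - (u - ub) * F' ub := by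
    linarith [step1, step2, h3]
  refine le_trans ?_ hcomb
  -- rewrite the constant
  have h8 : (2:ℝ) ^ (3:ℝ) = 8 := by
    rw [show (3:ℝ) = ((3:ℕ):ℝ) by norm_num, Real.rpow_natCast]
    norm_num
  have h2m : (2:ℝ) ^ (m+1) = (2:ℝ) ^ (m-2) * 8 := by
    rw [show m + 1 = (m-2) + 3 by ring, Real.rpow_add (by norm_num : (0:ℝ) < 2), h8]
  have hdiv : (ub/2) ^ (m-2) = ub ^ (m-2) / 2 ^ (m-2) :=
    Real.div_rpow hub0.le (by norm_num : (0:ℝ) ≤ 2) (m - 2)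
  have h2pos : (0:ℝ) < (2:ℝ) ^ (m-2) := Real.rpow_pos_of_pos (by norm_num) _
  have hconst : 3 * c₀ / 2 ^ (m + 1) * ub ^ (m - 2) = 3/8 * c := by
    rw [h2m, hc, hdiv]
    field_simp
  rw [hconst]
  have hs1 : ub - a ≤ ub - u := by linarith
  have hs2 : (ub - u)/2 ≤ ub - a := by
    rcases le_or_gt u (ub/2) with h | h
    · have : a = ub/2 := max_eq_right h
      rw [this]; linarith
    · have : a = u := max_eq_left h.le
      rw [this]; linarith
  have hprod : 0 ≤ c * (((ub - a) - (ub - u)/2) * (3*(ub - u)/2 - (ub - a))) :=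
    mul_nonneg hcpos.le (mul_nonneg (by linarith) (by linarith))
  linarith [hprod]
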